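/- Fix an integer δ and a natural number r ≥ 1. Define a vacillating tableau of shape λ and length r as a sequence (t_0 = ∅, t_1, …, t_{2r−1} = λ) of partitions where at each odd index a box is added or nothing changes, and at each even index ≥ 2 a box is removed or nothing changes. Define its weight w ∈ ℤ^{2r−1} by: for odd m, w_m = c(ε) if a box ε was added at step m, and w_m = δ − |t_m| if t_m = t_{m−1}; for even m, w_m = δ − c(ε) if a box ε was removed at step m, and w_m = |t_m| if t_m = t_{m−1} (here c(ε) = j − i is the content of the box ε = (i,j), and |t_m| the number of boxes of t_m). Theorem: Let μ be a partition of r, and let λ ≠ μ be a partition with |λ| ≤ r. Then there exist a vacillating tableau u of shape μ and a vacillating tableau t of shape λ, both of length r, with equal weight vectors, if and only if there exists a row index i such that λ_j = μ_j for all j ≠ i, μ_i − i = δ − |λ|, and λ_i − i = δ − |μ|. -/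

import Mathlib

/-- A partition: a weakly decreasing, eventually zero sequence of naturals. -/
def IsPartition (l : ℕ → ℕ) : Prop :=
  Antitone l ∧ ∃ N, ∀ i, N ≤ i → l i = 0

/-- The result of adding a box to row `i` (0-indexed). -/
def addRow (l : ℕ → ℕ) (i : ℕ) : ℕ → ℕ := Function.update l i (l i + 1)

/-- The number of boxes of a partition. -/
noncomputable def psize (l : ℕ → ℕ) : ℕ := Set.ncard {p : ℕ × ℕ | p.2 < l p.1}

/-- A vacillating tableau of shape `lam` and length `r`: a sequence
`t 0 = ∅, t 1, …, t (2r−1) = lam` of partitions such that at each odd index a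
box is added or nothing changes, and at each even index `≥ 2` a box is removed
or nothing changes.  (Entries of the sequence beyond index `2r−1` are
normalized to the empty partition.) -/
def IsVacTab (r : ℕ) (t : ℕ → ℕ → ℕ) (lam : ℕ → ℕ) : Prop :=
  (∀ m, m < 2 * r → IsPartition (t m)) ∧
  t 0 = (fun _ => 0) ∧
  t (2 * r - 1) = lam ∧
  (∀ m, m < 2 * r → m % 2 = 1 →
    (t m = t (m - 1) ∨ ∃ i, t m = addRow (t (m - 1)) i)) ∧
  (∀ m, 2 ≤ m → m < 2 * r → m % 2 = 0 →
    (t m = t (m - 1) ∨ ∃ i, t (m - 1) = addRow (t m) i)) ∧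
  (∀ m, 2 * r ≤ m → t m = fun _ => 0)

/-- `w` is the weight vector of the vacillating tableau `t` (with parameter `δ`):
at an odd step `m`, `w m` is the content of the added box, or `δ − |t m|` if
nothing changed; at an even step `m ≥ 2`, `w m` is `δ` minus the content of the
removed box, or `|t m|` if nothing changed. -/
def HasWeight (δ : ℤ) (r : ℕ) (t : ℕ → ℕ → ℕ) (w : ℕ → ℤ) : Prop :=
  ∀ m, 1 ≤ m → m < 2 * r →
    (m % 2 = 1 →
      ((t m = t (m - 1) ∧ w m = δ - psize (t m)) ∨
        ∃ i, t m = addRow (t (m - 1)) i ∧ w m = (t (m - 1) i : ℤ) - i)) ∧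
    (m % 2 = 0 →
      ((t m = t (m - 1) ∧ w m = (psize (t m) : ℤ)) ∨
        ∃ i, t (m - 1) = addRow (t m) i ∧ w m = δ - ((t m i : ℤ) - i)))

lemma addRow_apply (l : ℕ → ℕ) (i j : ℕ) :
    addRow l i j = if j = i then l i + 1 else l j := Function.update_apply l i (l i + 1) j

lemma addRow_self (l : ℕ → ℕ) (i : ℕ) : addRow l i i = l i + 1 := by simp [addRow]

lemma addRow_ne (l : ℕ → ℕ) {i j : ℕ} (h : j ≠ i) : addRow l i j = l j := by
  simp [addRow_apply, h]

lemma addRow_ne_self (l : ℕ → ℕ) (i : ℕ) : addRow l i ≠ l := by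
  intro h
  have := congrFun h i
  rw [addRow_self] at this
  omega

lemma boxes_finite {l : ℕ → ℕ} (hl : IsPartition l) : {p : ℕ × ℕ | p.2 < l p.1}.Finite := by
  obtain ⟨hA, N, hN⟩ := hl
  apply Set.Finite.subset ((Set.finite_Iio N).prod (Set.finite_Iio (l 0)))
  rintro ⟨a, b⟩ h
  simp only [Set.mem_setOf_eq] at h
  constructor
  · simp only [Set.mem_Iio]
    by_contra hc
    push_neg at hc
    have := hN a hc
    omega
  · simp only [Set.mem_Iio]
    have := hA (Nat.zero_le a)
    omega

lemma psize_addRow {l : ℕ → ℕ} (hl : IsPartition l) (i : ℕ) :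
    psize (addRow l i) = psize l + 1 := by
  have hset : {p : ℕ × ℕ | p.2 < addRow l i p.1} = insert (i, l i) {p : ℕ × ℕ | p.2 < l p.1} := by
    ext ⟨a, b⟩
    simp only [Set.mem_setOf_eq, Set.mem_insert_iff, Prod.mk.injEq, addRow_apply]
    by_cases h : a = i <;> simp [h] <;> omega
  rw [psize, hset, Set.ncard_insert_of_notMem (by simp) (boxes_finite hl)]
  rfl

lemma psize_eq_sum {l : ℕ → ℕ} (N : ℕ) (hN : ∀ j, N ≤ j → l j = 0) :
    psize l = ∑ j ∈ Finset.range N, l j := by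
  have hset : {p : ℕ × ℕ | p.2 < l p.1} =
      ↑((Finset.range N).biUnion (fun j => ({j} : Finset ℕ) ×ˢ Finset.range (l j))) := by
    ext ⟨a, b⟩
    simp only [Set.mem_setOf_eq, Finset.coe_biUnion, Set.mem_iUnion, Finset.mem_coe,
      Finset.mem_biUnion, Finset.mem_range, Finset.mem_product, Finset.mem_singleton]
    constructor
    · intro h
      refine ⟨a, ?_, rfl, h⟩
      by_contra hc
      push_neg at hc
      have := hN a hc
      omega
    · rintro ⟨j, _, rfl, h⟩
      exact h
  rw [psize, hset, Set.ncard_coe_finset, Finset.card_biUnion]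
  · congr 1
    ext j
    rw [Finset.card_product]
    simp
  · intro x _ y _ hxy
    simp only [Finset.disjoint_left]
    rintro ⟨a, b⟩ h1 h2
    simp only [Finset.mem_product, Finset.mem_singleton] at h1 h2
    exact hxy (h1.1.symm.trans h2.1)

lemma psize_empty : psize (fun _ => 0) = 0 := by
  rw [psize_eq_sum 0 (fun _ _ => rfl)]
  simp

lemma content_strictAnti {l : ℕ → ℕ} (hl : IsPartition l) :
    StrictAnti (fun j => (l j : ℤ) - j) := by
  intro a b hab
  have h1 : l b ≤ l a := hl.1 hab.le
  have h2 : (l b : ℤ) ≤ l a := by exact_mod_cast h1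
  simp only
  omega

lemma content_inj {l : ℕ → ℕ} (hl : IsPartition l) {a b : ℕ}
    (h : (l a : ℤ) - a = (l b : ℤ) - b) : a = b :=
  (content_strictAnti hl).injective h

def Aset (l : ℕ → ℕ) : Set ℤ := Set.range (fun j => (l j : ℤ) - j)

lemma mem_Aset {l : ℕ → ℕ} {x : ℤ} : x ∈ Aset l ↔ ∃ j, (l j : ℤ) - j = x := Set.mem_range

/-- Key facts about the content-set of `addRow l i`. -/
lemma Aset_addRow {l : ℕ → ℕ} {i : ℕ} (hl : IsPartition l) (hl' : IsPartition (addRow l i)) :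
    (∀ x : ℤ, x ∈ Aset (addRow l i) ↔
      ((x ∈ Aset l ∧ x ≠ (l i : ℤ) - i) ∨ x = (l i : ℤ) - i + 1)) ∧
    ((l i : ℤ) - i ∈ Aset l) ∧ ((l i : ℤ) - i + 1 ∉ Aset l) ∧
    ((l i : ℤ) - i ∉ Aset (addRow l i)) ∧ ((l i : ℤ) - i + 1 ∈ Aset (addRow l i)) := by
  set c : ℤ := (l i : ℤ) - i with hc
  have hai : (addRow l i i : ℤ) = (l i : ℤ) + 1 := by rw [addRow_self]; push_cast; ring
  have hci : c ∈ Aset l := mem_Aset.2 ⟨i, rfl⟩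
  have hc1i : c + 1 ∈ Aset (addRow l i) := mem_Aset.2 ⟨i, by rw [hai]; ring⟩
  have hc1 : c + 1 ∉ Aset l := by
    intro h
    rcases mem_Aset.1 h with ⟨j, hj⟩
    have hji : j ≠ i := by rintro rfl; omega
    have hj' : ((addRow l i) j : ℤ) - j = c + 1 := by rw [addRow_ne l hji]; exact hj
    have hi' : ((addRow l i) i : ℤ) - i = c + 1 := by rw [hai]; ring
    exact hji (content_inj hl' (hj'.trans hi'.symm))
  have hcn : c ∉ Aset (addRow l i) := by
    intro h
    rcases mem_Aset.1 h with ⟨j, hj⟩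
    have hji : j ≠ i := by rintro rfl; rw [hai] at hj; omega
    rw [addRow_ne l hji] at hj
    exact hji (content_inj hl hj)
  refine ⟨?_, hci, hc1, hcn, hc1i⟩
  intro x
  constructor
  · intro h
    rcases mem_Aset.1 h with ⟨j, hj⟩
    by_cases hji : j = i
    · subst hji
      right
      rw [hai] at hj
      omega
    · rw [addRow_ne l hji] at hj
      left
      refine ⟨mem_Aset.2 ⟨j, hj⟩, ?_⟩
      rintro rfl
      exact hcn (mem_Aset.2 ⟨j, by rw [addRow_ne l hji]; exact hj⟩)
  · rintro (⟨hx, hne⟩ | rfl)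
    · rcases mem_Aset.1 hx with ⟨j, hj⟩
      have hji : j ≠ i := by rintro rfl; exact hne hj.symm
      exact mem_Aset.2 ⟨j, by rw [addRow_ne l hji]; exact hj⟩
    · exact hc1i

/-- Extraction lemma: two strictly decreasing integer sequences whose ranges differ
by a single swap `T ↦ B` with no common values in between agree off a single index. -/
lemma ext_lemma {β γ : ℕ → ℤ} (hβ : StrictAnti β) (hγ : StrictAnti γ)
    {T B : ℤ} (hBT : B < T) {i : ℕ} (hTi : γ i = T)
    (hiff : ∀ x : ℤ, (x ∈ Set.range β) ↔ ((x ∈ Set.range γ ∧ x ≠ T) ∨ x = B))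
    (hbtw : ∀ x : ℤ, B < x → x < T → x ∉ Set.range γ)
    (hBγ : B ∉ Set.range γ) :
    β i = B ∧ ∀ j, j ≠ i → β j = γ j := by
  have key : ∀ j, β j = if j = i then B else γ j := by
    intro j
    induction j using Nat.strong_induction_on with
    | _ j IH =>
      rcases lt_trichotomy j i with hji | hji | hij
      · -- j < i : β j = γ j
        simp only [if_neg hji.ne]
        have hγj : γ j ∈ Set.range β := by
          apply (hiff (γ j)).2
          left
          exact ⟨⟨j, rfl⟩, by have := hγ hji; omega⟩
        obtain ⟨p, hp⟩ := hγj
        have hpj : j ≤ p := by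
          by_contra hc
          push_neg at hc
          have hIH := IH p hc
          rw [if_neg (by omega : p ≠ i)] at hIH
          have h1 : γ p > γ j := hγ hc
          omega
        have h1 : β j ≥ γ j := by
          have := hβ.antitone hpj
          omega
        rcases (hiff (β j)).1 ⟨j, rfl⟩ with ⟨⟨q, hq⟩, _⟩ | hB
        · rcases lt_trichotomy q j with hqj | hqj | hjq
          · exfalso
            have hIH := IH q (by omega)
            rw [if_neg (by omega : q ≠ i)] at hIH
            have : q = j := hβ.injective (by rw [hIH]; exact hq)
            omega
          · subst hqj; exact hq.symm
          · exfalso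
            have := hγ hjq
            have hTj : γ j > T := by have := hγ hji; omega
            omega
        · exfalso
          have hTj : γ j > T := hTi ▸ hγ hji
          omega
      · -- j = i : β i = B
        subst hji
        simp only [if_pos rfl]
        have hBβ : B ∈ Set.range β := (hiff B).2 (Or.inr rfl)
        obtain ⟨p, hp⟩ := hBβ
        have hpi : j ≤ p := by
          by_contra hc
          push_neg at hc
          have hIH := IH p hc
          rw [if_neg (by omega : p ≠ j)] at hIH
          have h1 : γ p > γ j := hγ hc
          omega
        have h1 : β j ≥ B := by
          have := hβ.antitone hpi
          omega
        rcases (hiff (β j)).1 ⟨j, rfl⟩ with ⟨⟨q, hq⟩, hneT⟩ | hB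
        · have hqi : j ≤ q := by
            by_contra hc
            push_neg at hc
            have hIH := IH q hc
            rw [if_neg (by omega : q ≠ j)] at hIH
            have : q = j := hβ.injective (by rw [hIH]; exact hq)
            omega
          have h2 : β j ≤ T := by
            have := hγ.antitone hqi
            omega
          have h3 : β j < T := lt_of_le_of_ne h2 hneT
          rcases eq_or_lt_of_le h1 with he | hlt
          · exact he.symm
          · exact absurd ⟨q, hq⟩ (hbtw (β j) hlt h3)
        · exact hB
      · -- j > i : β j = γ j
        simp only [if_neg (by omega : j ≠ i)]
        have hγjB : γ j < B := by
          have h1 : γ j < T := hTi ▸ hγ hij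
          rcases lt_trichotomy (γ j) B with h | h | h
          · exact h
          · exact absurd (h ▸ ⟨j, rfl⟩) hBγ
          · exact absurd ⟨j, rfl⟩ (hbtw (γ j) h h1)
        have hγj : γ j ∈ Set.range β := (hiff (γ j)).2 (Or.inl ⟨⟨j, rfl⟩, by omega⟩)
        obtain ⟨p, hp⟩ := hγj
        have hpj : j ≤ p := by
          by_contra hc
          push_neg at hc
          have hIH := IH p hc
          by_cases hpi : p = i
          · rw [if_pos hpi] at hIH
            omega
          · rw [if_neg hpi] at hIH
            have h1 : γ p > γ j := hγ (by omega : p < j)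
            omega
        have h1 : β j ≥ γ j := by have := hβ.antitone hpj; omega
        rcases (hiff (β j)).1 ⟨j, rfl⟩ with ⟨⟨q, hq⟩, hneT⟩ | hB
        · have hqj : j ≤ q := by
            by_contra hc
            push_neg at hc
            by_cases hqi : q = i
            · subst hqi
              rw [hTi] at hq
              exact hneT hq.symm
            · have hIH := IH q hc
              rw [if_neg hqi] at hIH
              have : q = j := hβ.injective (by rw [hIH]; exact hq)
              omega
          have := hγ.antitone hqj
          omega
        · exfalso
          have hIHi := IH i hij
          rw [if_pos rfl] at hIHi
          have := hβ hij
          omega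
  exact ⟨by rw [key i, if_pos rfl], fun j hj => by rw [key j, if_neg hj]⟩

/-! ### Swap pack: the relation between the content sets of the two tableaux -/

structure SwapPack (Au At : Set ℤ) (T B : ℤ) : Prop where
  hiff : ∀ x : ℤ, x ∈ At ↔ ((x ∈ Au ∧ x ≠ T) ∨ x = B)
  hBT : B < T
  hbtw : ∀ x : ℤ, B < x → x < T → x ∉ Au
  hTu : T ∈ Au
  hBu : B ∉ Au

namespace SwapPack

variable {Au At Au' At' : Set ℤ} {T B c : ℤ}

lemma hTt (h : SwapPack Au At T B) : T ∉ At := by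
  intro hT
  rcases (h.hiff T).1 hT with ⟨_, h2⟩ | h2
  · exact h2 rfl
  · have := h.hBT; omega

lemma hBt (h : SwapPack Au At T B) : B ∈ At := (h.hiff B).2 (Or.inr rfl)

lemma step_both (h : SwapPack Au At T B)
    (hu' : ∀ x : ℤ, x ∈ Au' ↔ ((x ∈ Au ∧ x ≠ c) ∨ x = c + 1))
    (hcu : c ∈ Au) (hc1u : c + 1 ∉ Au)
    (ht' : ∀ x : ℤ, x ∈ At' ↔ ((x ∈ At ∧ x ≠ c) ∨ x = c + 1))
    (hct : c ∈ At) (hc1t : c + 1 ∉ At) :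
    SwapPack Au' At' T B := by
  have hcT : c ≠ T := fun he => h.hTt (he ▸ hct)
  have hcB : c ≠ B := fun he => h.hBu (he ▸ hcu)
  have hc1T : c + 1 ≠ T := fun he => hc1u (he ▸ h.hTu)
  have hc1B : c + 1 ≠ B := fun he => hc1t (he ▸ h.hBt)
  have hcout : c < B ∨ T < c := by
    rcases lt_trichotomy c B with h1 | h1 | h1
    · exact Or.inl h1
    · exact absurd h1 hcB
    rcases lt_trichotomy c T with h2 | h2 | h2
    · exact absurd hcu (h.hbtw c h1 h2)
    · exact absurd h2 hcT
    · exact Or.inr h2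
  refine ⟨?_, h.hBT, ?_, ?_, ?_⟩
  · intro x
    rw [ht', hu', h.hiff x]
    constructor
    · rintro (⟨(⟨hx, hxT⟩ | rfl), hxc⟩ | rfl)
      · exact Or.inl ⟨Or.inl ⟨hx, hxc⟩, hxT⟩
      · exact Or.inr rfl
      · exact Or.inl ⟨Or.inr rfl, hc1T⟩
    · rintro (⟨(⟨hx, hxc⟩ | rfl), hxT⟩ | rfl)
      · exact Or.inl ⟨Or.inl ⟨hx, hxT⟩, hxc⟩
      · exact Or.inr rfl
      · exact Or.inl ⟨Or.inr rfl, Ne.symm hcB⟩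
  · intro x h1 h2 hx
    rcases (hu' x).1 hx with ⟨hx', _⟩ | rfl
    · exact h.hbtw x h1 h2 hx'
    · omega
  · exact (hu' T).2 (Or.inl ⟨h.hTu, fun he => hcT he.symm⟩)
  · intro hB
    rcases (hu' B).1 hB with ⟨hB', _⟩ | he
    · exact h.hBu hB'
    · exact hc1B he.symm

lemma step_ustay (h : SwapPack Au At T B)
    (hu' : ∀ x : ℤ, x ∈ Au' ↔ ((x ∈ Au ∧ x ≠ T) ∨ x = T + 1))
    (hT1u : T + 1 ∉ Au) :
    SwapPack Au' At (T + 1) B := by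
  refine ⟨?_, by have := h.hBT; omega, ?_, ?_, ?_⟩
  · intro x
    rw [h.hiff x]
    constructor
    · rintro (⟨hx, hxT⟩ | rfl)
      · exact Or.inl ⟨(hu' x).2 (Or.inl ⟨hx, hxT⟩), fun he => hT1u (he ▸ hx)⟩
      · exact Or.inr rfl
    · rintro (⟨hx, hxT1⟩ | rfl)
      · rcases (hu' x).1 hx with ⟨hx', hxT⟩ | rfl
        · exact Or.inl ⟨hx', hxT⟩
        · exact absurd rfl hxT1
      · exact Or.inr rfl
  · intro x h1 h2 hx
    rcases (hu' x).1 hx with ⟨hx', hxT⟩ | rfl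
    · rcases lt_trichotomy x T with h3 | h3 | h3
      · exact h.hbtw x h1 h3 hx'
      · exact hxT h3
      · omega
    · omega
  · exact (hu' (T + 1)).2 (Or.inr rfl)
  · intro hB
    rcases (hu' B).1 hB with ⟨hB', _⟩ | he
    · exact h.hBu hB'
    · have := h.hBT; omega

lemma step_tdown (h : SwapPack Au At T B)
    (hrel : ∀ x : ℤ, x ∈ At ↔ ((x ∈ At' ∧ x ≠ B - 1) ∨ x = B))
    (hct' : B - 1 ∈ At') (hc1t' : B ∉ At') :
    SwapPack Au At' T (B - 1) := by
  have hB1t : B - 1 ∉ At := by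
    intro hx
    rcases (hrel (B - 1)).1 hx with ⟨_, h2⟩ | h2
    · exact h2 rfl
    · omega
  have hinv : ∀ x : ℤ, x ∈ At' ↔ ((x ∈ At ∧ x ≠ B) ∨ x = B - 1) := by
    intro x
    constructor
    · intro hx
      by_cases hxB1 : x = B - 1
      · exact Or.inr hxB1
      · exact Or.inl ⟨(hrel x).2 (Or.inl ⟨hx, hxB1⟩), fun he => hc1t' (he ▸ hx)⟩
    · rintro (⟨hx, hxB⟩ | rfl)
      · rcases (hrel x).1 hx with ⟨hx', _⟩ | he
        · exact hx'
        · exact absurd he hxB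
      · exact hct'
  refine ⟨?_, by have := h.hBT; omega, ?_, h.hTu, ?_⟩
  · intro x
    rw [hinv x, h.hiff x]
    constructor
    · rintro (⟨(⟨hx, hxT⟩ | rfl), hxB⟩ | rfl)
      · exact Or.inl ⟨hx, hxT⟩
      · exact absurd rfl hxB
      · exact Or.inr rfl
    · rintro (⟨hx, hxT⟩ | rfl)
      · exact Or.inl ⟨Or.inl ⟨hx, hxT⟩, fun he => h.hBu (he ▸ hx)⟩
      · exact Or.inr rfl
  · intro x h1 h2
    rcases eq_or_lt_of_le (by omega : B ≤ x) with he | hlt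
    · exact he ▸ h.hBu
    · exact h.hbtw x hlt h2
  · intro hB1
    have hB1T : (B - 1 : ℤ) ≠ T := by have := h.hBT; omega
    exact hB1t ((h.hiff (B - 1)).2 (Or.inl ⟨hB1, hB1T⟩))

lemma base_ustay (hAeq : At = Au)
    (hu' : ∀ x : ℤ, x ∈ Au' ↔ ((x ∈ Au ∧ x ≠ c) ∨ x = c + 1))
    (hcu : c ∈ Au) (hc1u : c + 1 ∉ Au) :
    SwapPack Au' At (c + 1) c := by
  subst hAeq
  have hcAu' : c ∉ Au' := by
    intro hc
    rcases (hu' c).1 hc with ⟨_, h2⟩ | h2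
    · exact h2 rfl
    · omega
  refine ⟨?_, by omega, ?_, (hu' (c + 1)).2 (Or.inr rfl), hcAu'⟩
  · intro x
    constructor
    · intro hx
      by_cases hxc : x = c
      · exact Or.inr hxc
      · exact Or.inl ⟨(hu' x).2 (Or.inl ⟨hx, hxc⟩), fun he => hc1u (he ▸ hx)⟩
    · rintro (⟨hx, hxc1⟩ | rfl)
      · rcases (hu' x).1 hx with ⟨hx', _⟩ | he
        · exact hx'
        · exact absurd he hxc1
      · exact hcu
  · intro x h1 h2 hx
    omega

lemma base_trem {Aprev : Set ℤ} (hAeq : Au = Aprev)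
    (hrel : ∀ x : ℤ, x ∈ Aprev ↔ ((x ∈ At' ∧ x ≠ c) ∨ x = c + 1))
    (hct : c ∈ At') (hc1t : c + 1 ∉ At') :
    SwapPack Au At' (c + 1) c := by
  subst hAeq
  have hc1p : c + 1 ∈ Au := (hrel (c + 1)).2 (Or.inr rfl)
  have hcp : c ∉ Au := by
    intro hc
    rcases (hrel c).1 hc with ⟨_, h2⟩ | h2
    · exact h2 rfl
    · omega
  refine ⟨?_, by omega, ?_, hc1p, hcp⟩
  · intro x
    constructor
    · intro hx
      by_cases hxc : x = c
      · exact Or.inr hxc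
      · exact Or.inl ⟨(hrel x).2 (Or.inl ⟨hx, hxc⟩), fun he => hc1t (he ▸ hx)⟩
    · rintro (⟨hx, hxc1⟩ | rfl)
      · rcases (hrel x).1 hx with ⟨hx', _⟩ | he
        · exact hx'
        · exact absurd he hxc1
      · exact hct
  · intro x h1 h2 hx
    omega

end SwapPack

section VacTab

variable {δ : ℤ} {r : ℕ} {u t : ℕ → ℕ → ℕ} {w : ℕ → ℤ} {lam mu : ℕ → ℕ}

/-- One-step size comparison coming from the vacillating tableau conditions. -/
lemma vac_step_size (ht : IsVacTab r t lam) {m : ℕ} (h1 : 1 ≤ m) (h2 : m < 2 * r) :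
    (m % 2 = 1 → psize (t m) ≤ psize (t (m - 1)) + 1) ∧
    (m % 2 = 0 → psize (t m) ≤ psize (t (m - 1)) ∧ psize (t (m - 1)) ≤ psize (t m) + 1) := by
  constructor
  · intro hodd
    rcases ht.2.2.2.1 m h2 hodd with hst | ⟨j, hj⟩
    · rw [hst]; omega
    · rw [hj, psize_addRow (ht.1 (m - 1) (by omega)) j]
  · intro heven
    rcases ht.2.2.2.2.1 m (by omega) h2 heven with hst | ⟨j, hj⟩
    · rw [hst]; omega
    · rw [hj, psize_addRow (ht.1 m h2) j]; omega

lemma vac_size_le (ht : IsVacTab r t lam) : ∀ m, m < 2 * r → psize (t m) ≤ (m + 1) / 2 := by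
  intro m
  induction m using Nat.strong_induction_on with
  | _ m IH =>
    intro hm
    rcases Nat.eq_zero_or_pos m with rfl | hpos
    · rw [ht.2.1, psize_empty]
    · have hprev := IH (m - 1) (by omega) (by omega)
      have hstep := vac_step_size ht hpos hm
      rcases Nat.even_or_odd m with he | ho
      · have h0 : m % 2 = 0 := Nat.even_iff.1 he
        have := (hstep.2 h0).1
        omega
      · have h1 : m % 2 = 1 := Nat.odd_iff.1 ho
        have := hstep.1 h1
        omega

lemma vac_size_full (ht : IsVacTab r t lam) (hr : 1 ≤ r)
    (hfull : psize (t (2 * r - 1)) = r) :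
    ∀ m, m < 2 * r → psize (t m) = (m + 1) / 2 := by
  have aux : ∀ j m, m + j = 2 * r - 1 → (m + 1) / 2 ≤ psize (t m) := by
    intro j
    induction j with
    | zero =>
      intro m hm
      have : m = 2 * r - 1 := by omega
      subst this
      omega
    | succ j IH =>
      intro m hm
      have h2 := IH (m + 1) (by omega)
      have hstep := vac_step_size ht (by omega : 1 ≤ m + 1) (by omega : m + 1 < 2 * r)
      have hsub : m + 1 - 1 = m := by omega
      rw [hsub] at hstep
      rcases Nat.even_or_odd (m + 1) with he | ho
      · have h0 : (m + 1) % 2 = 0 := Nat.even_iff.1 he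
        have := (hstep.2 h0).2
        omega
      · have h1 : (m + 1) % 2 = 1 := Nat.odd_iff.1 ho
        have := hstep.1 h1
        omega
  intro m hm
  have := aux (2 * r - 1 - m) m (by omega)
  have := vac_size_le ht m hm
  omega

/-- Structure of a vacillating tableau whose final shape has the full number of boxes:
it adds a box at every odd step and stays at every even step, and
the weights are completely determined. -/
lemma u_struct (hu : IsVacTab r u mu) (hwu : HasWeight δ r u w) (hr : 1 ≤ r)
    (hfull : psize (u (2 * r - 1)) = r) :
    (∀ k, 1 ≤ k → k ≤ r - 1 → u (2 * k) = u (2 * k - 1) ∧ w (2 * k) = k) ∧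
    (∀ k, 1 ≤ k → k ≤ r →
      ∃ j, u (2 * k - 1) = addRow (u (2 * k - 2)) j ∧ w (2 * k - 1) = (u (2 * k - 2) j : ℤ) - j) := by
  have hsz := vac_size_full hu hr hfull
  constructor
  · intro k hk1 hkr
    have hm : 2 * k < 2 * r := by omega
    have hs1 : psize (u (2 * k)) = k := by rw [hsz (2 * k) hm]; omega
    have hs2 : psize (u (2 * k - 1)) = k := by rw [hsz (2 * k - 1) (by omega)]; omega
    have hstay : u (2 * k) = u (2 * k - 1) := by
      rcases hu.2.2.2.2.1 (2 * k) (by omega) hm (by omega) with hst | ⟨j, hj⟩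
      · exact hst
      · exfalso
        have := psize_addRow (hu.1 (2 * k) hm) j
        rw [← hj] at this
        omega
    refine ⟨hstay, ?_⟩
    rcases (hwu (2 * k) (by omega) hm).2 (by omega) with ⟨_, hw⟩ | ⟨j, hj, _⟩
    · rw [hw, hs1]
    · exfalso
      rw [← hstay] at hj
      exact addRow_ne_self (u (2 * k)) j hj.symm
  · intro k hk1 hkr
    have hm : 2 * k - 1 < 2 * r := by omega
    have hs1 : psize (u (2 * k - 1)) = k := by rw [hsz (2 * k - 1) hm]; omega
    have hs2 : psize (u (2 * k - 2)) = k - 1 := by rw [hsz (2 * k - 2) (by omega)]; omega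
    rcases (hwu (2 * k - 1) (by omega) hm).1 (by omega) with ⟨hst, _⟩ | ⟨j, hj, hw⟩
    · exfalso
      have hsub : 2 * k - 1 - 1 = 2 * k - 2 := by omega
      rw [hsub] at hst
      rw [hst] at hs1
      omega
    · have hsub : 2 * k - 1 - 1 = 2 * k - 2 := by omega
      rw [hsub] at hj hw
      exact ⟨j, hj, hw⟩

/-- Determinism: while `t` has the full number of boxes it coincides with `u`. -/
lemma prefix_eq (hu : IsVacTab r u mu) (ht : IsVacTab r t lam)
    (hwu : HasWeight δ r u w) (hwt : HasWeight δ r t w) (hr : 1 ≤ r)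
    (hfull : psize (u (2 * r - 1)) = r) :
    ∀ m, m < 2 * r → (∀ m', m' ≤ m → psize (t m') = (m' + 1) / 2) → t m = u m := by
  have hU := u_struct hu hwu hr hfull
  intro m
  induction m using Nat.strong_induction_on with
  | _ m IH =>
    intro hm hszfull
    rcases Nat.eq_zero_or_pos m with rfl | hpos
    · rw [ht.2.1, hu.2.1]
    · have hIH : t (m - 1) = u (m - 1) := IH (m - 1) (by omega) (by omega)
        (fun m' hm' => hszfull m' (by omega))
      rcases Nat.even_or_odd m with he | ho
      · -- even step: both stay
        have h0 : m % 2 = 0 := Nat.even_iff.1 he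
        set k := m / 2 with hk
        have hm2 : m = 2 * k := by omega
        have hustay := (hU.1 k (by omega) (by omega)).1
        have htstay : t m = t (m - 1) := by
          rcases ht.2.2.2.2.1 m (by omega) hm h0 with hst | ⟨j, hj⟩
          · exact hst
          · exfalso
            have := psize_addRow (ht.1 m hm) j
            rw [← hj] at this
            have e1 := hszfull m le_rfl
            have e2 := hszfull (m - 1) (by omega)
            omega
        rw [htstay, hIH, hm2]
        have : 2 * k - 1 = m - 1 := by omega
        rw [← hm2, ← this] at hustay ⊢
        exact hustay.symm ▸ rfl
      · -- odd step: both add a box of the same content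
        have h1 : m % 2 = 1 := Nat.odd_iff.1 ho
        set k := (m + 1) / 2 with hk
        have hm2 : m = 2 * k - 1 := by omega
        obtain ⟨b, hub, hwub⟩ := hU.2 k (by omega) (by omega)
        rcases (hwt m (by omega) hm).1 h1 with ⟨hst, _⟩ | ⟨a, hta, hwta⟩
        · exfalso
          have e1 := hszfull m le_rfl
          have e2 := hszfull (m - 1) (by omega)
          rw [hst] at e1
          omega
        · have he1 : 2 * k - 1 = m := by omega
          have he2 : 2 * k - 2 = m - 1 := by omega
          rw [he1, he2] at hub hwub
          rw [hIH] at hta hwta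
          have hcont : (u (m - 1) a : ℤ) - a = (u (m - 1) b : ℤ) - b := by
            rw [← hwta, ← hwub]
          have hab : a = b := content_inj (hIH ▸ ht.1 (m - 1) (by omega)) hcont
          rw [hta, hab, ← hub]
  
end VacTab

lemma forward_dir (δ : ℤ) (r : ℕ) (hr : 1 ≤ r) (lam mu : ℕ → ℕ)
    (hlam : IsPartition lam) (hmu : IsPartition mu)
    (hmur : psize mu = r) (hne : lam ≠ mu)
    (u t : ℕ → ℕ → ℕ) (w : ℕ → ℤ)
    (hu : IsVacTab r u mu) (ht : IsVacTab r t lam)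
    (hwu : HasWeight δ r u w) (hwt : HasWeight δ r t w) :
    ∃ i : ℕ, (∀ j, j ≠ i → lam j = mu j) ∧
      (mu i : ℤ) - (i + 1) = δ - psize lam ∧
      (lam i : ℤ) - (i + 1) = δ - psize mu := by
  classical
  have hfull : psize (u (2 * r - 1)) = r := by rw [hu.2.2.1]; exact hmur
  have hU := u_struct hu hwu hr hfull
  have hex : ∃ m, 1 ≤ m ∧ m < 2 * r ∧ psize (t m) ≠ (m + 1) / 2 := by
    by_contra hc
    push_neg at hc
    apply hne
    have heq : t (2 * r - 1) = u (2 * r - 1) :=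
      prefix_eq hu ht hwu hwt hr hfull (2 * r - 1) (by omega)
        (fun m' hm' => by
          rcases Nat.eq_zero_or_pos m' with rfl | hpos
          · rw [ht.2.1, psize_empty]
          · exact hc m' hpos (by omega))
    rw [← ht.2.2.1, ← hu.2.2.1, heq]
  obtain ⟨hm01, hm0lt, hm0dev⟩ := Nat.find_spec hex
  set m0 := Nat.find hex with hm0def
  have hmin : ∀ m, m < m0 → psize (t m) = (m + 1) / 2 := by
    intro m hm
    rcases Nat.eq_zero_or_pos m with rfl | hpos
    · rw [ht.2.1, psize_empty]
    · by_contra hne'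
      exact Nat.find_min hex hm ⟨hpos, by omega, hne'⟩
  have tprefix : ∀ m, m < m0 → t m = u m := fun m hm =>
    prefix_eq hu ht hwu hwt hr hfull m (by omega)
      (fun m' hm' => hmin m' (by omega))
  have P1 : ∀ m, m0 ≤ m → m < 2 * r → psize (t m) < (m + 1) / 2 := by
    intro m
    induction m using Nat.strong_induction_on with
    | _ m IH =>
      intro hm0m hm
      rcases eq_or_lt_of_le hm0m with he | hlt
      · rw [← he]
        exact lt_of_le_of_ne (vac_size_le ht m0 hm0lt) hm0dev
      · have hIH := IH (m - 1) (by omega) (by omega) (by omega)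
        have hstep := vac_step_size ht (by omega) hm
        rcases Nat.even_or_odd m with heo | heo
        · have h0 : m % 2 = 0 := Nat.even_iff.1 heo
          have := (hstep.2 h0).1
          omega
        · have h1 : m % 2 = 1 := Nat.odd_iff.1 heo
          have := hstep.1 h1
          omega
  have hR : ∀ k, m0 ≤ 2 * k → 2 * k < 2 * r →
      ∃ j, t (2 * k - 1) = addRow (t (2 * k)) j ∧ (t (2 * k) j : ℤ) - j = δ - k := by
    intro k hk1 hk2
    have hk0 : 1 ≤ k := by omega
    have hwk : w (2 * k) = k := (hU.1 k hk0 (by omega)).2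
    rcases (hwt (2 * k) (by omega) hk2).2 (by omega) with ⟨_, hw⟩ | ⟨j, hj, hw⟩
    · exfalso
      have hP := P1 (2 * k) hk1 hk2
      rw [hwk] at hw
      have : psize (t (2 * k)) = k := by exact_mod_cast hw.symm
      omega
    · refine ⟨j, hj, ?_⟩
      rw [hwk] at hw
      omega
  set k1 := (m0 + 1) / 2 with hk1def
  have hm0cases : m0 = 2 * k1 - 1 ∨ m0 = 2 * k1 := by omega
  have Phi : ∀ m, m0 ≤ m → m < 2 * r → ∃ S Q : ℕ,
      Q + k1 = m / 2 + 1 ∧ psize (t m) + S + Q = (m + 1) / 2 ∧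
      SwapPack (Aset (u m)) (Aset (t m)) (δ + 1 - k1 + S) (δ + 1 - k1 - Q) := by
    intro m
    induction m using Nat.strong_induction_on with
    | _ m IH =>
      intro hm0m hm
      rcases eq_or_lt_of_le hm0m with he | hlt
      · -- base case : m = m0
        rw [← he]
        rcases hm0cases with hodd | heven
        · -- m0 odd : t stays, u adds a box of content δ + 1 - k1
          have h1 : m0 % 2 = 1 := by omega
          have hprev : t (m0 - 1) = u (m0 - 1) := tprefix (m0 - 1) (by omega)
          have hsprev : psize (t (m0 - 1)) = k1 - 1 := by
            rw [hmin (m0 - 1) (by omega)]; omega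
          have hstay : t m0 = t (m0 - 1) := by
            rcases ht.2.2.2.1 m0 hm0lt h1 with hst | ⟨j, hj⟩
            · exact hst
            · exfalso
              have hps := psize_addRow (ht.1 (m0 - 1) (by omega)) j
              rw [← hj] at hps
              exact hm0dev (by omega)
          have hsm0 : psize (t m0) = k1 - 1 := by rw [hstay]; exact hsprev
          have hwstay : w m0 = δ - psize (t m0) := by
            rcases (hwt m0 (by omega) hm0lt).1 h1 with ⟨_, hw⟩ | ⟨j, hj, _⟩
            · exact hw
            · exfalso; rw [hstay] at hj; exact addRow_ne_self _ j hj.symm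
          obtain ⟨b, hub, hwub⟩ := hU.2 k1 (by omega) (by omega)
          rw [(show 2 * k1 - 1 = m0 by omega), (show 2 * k1 - 2 = m0 - 1 by omega)] at hub hwub
          have hcval : (u (m0 - 1) b : ℤ) - b = δ + 1 - k1 := by
            rw [← hwub, hwstay, hsm0]
            omega
          have hA := Aset_addRow (hu.1 (m0 - 1) (by omega))
            (by rw [← hub]; exact hu.1 m0 hm0lt)
          rw [← hub] at hA
          obtain ⟨hiffA, hcu, hc1u, hcnu, hc1mem⟩ := hA
          have hAeq : Aset (t m0) = Aset (u (m0 - 1)) := by rw [hstay, hprev]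
          have pack := SwapPack.base_ustay hAeq hiffA hcu hc1u
          refine ⟨1, 0, by omega, by omega, ?_⟩
          rw [(show δ + 1 - (k1 : ℤ) + ((1 : ℕ) : ℤ) = ((u (m0 - 1) b : ℤ) - b) + 1 by
            rw [hcval]; push_cast; ring),
            (show δ + 1 - (k1 : ℤ) - ((0 : ℕ) : ℤ) = (u (m0 - 1) b : ℤ) - b by
            rw [hcval]; push_cast; ring)]
          exact pack
        · -- m0 even : t removes a box of content δ - k1
          have hprev : t (m0 - 1) = u (m0 - 1) := tprefix (m0 - 1) (by omega)
          obtain ⟨j, hj, hcj⟩ := hR k1 (by omega) (by omega)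
          rw [(show 2 * k1 - 1 = m0 - 1 by omega)] at hj
          rw [(show 2 * k1 = m0 by omega)] at hj hcj
          have hust := (hU.1 k1 (by omega) (by omega)).1
          rw [(show 2 * k1 - 1 = m0 - 1 by omega), (show 2 * k1 = m0 by omega)] at hust
          have hA := Aset_addRow (ht.1 m0 hm0lt)
            (by rw [← hj]; exact ht.1 (m0 - 1) (by omega))
          rw [← hj] at hA
          obtain ⟨hiffA, hct, hc1t, hcnt, hc1mem⟩ := hA
          have hAeq : Aset (u m0) = Aset (t (m0 - 1)) := by rw [hust, ← hprev]
          have pack := SwapPack.base_trem hAeq hiffA hct hc1t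
          have hps := psize_addRow (ht.1 m0 hm0lt) j
          rw [← hj] at hps
          have hsprev : psize (t (m0 - 1)) = k1 := by
            rw [hmin (m0 - 1) (by omega)]; omega
          refine ⟨0, 1, by omega, by omega, ?_⟩
          rw [(show δ + 1 - (k1 : ℤ) + ((0 : ℕ) : ℤ) = ((t m0 j : ℤ) - j) + 1 by
            rw [hcj]; push_cast; ring),
            (show δ + 1 - (k1 : ℤ) - ((1 : ℕ) : ℤ) = (t m0 j : ℤ) - j by
            rw [hcj]; push_cast; ring)]
          exact pack
      · -- inductive step
        obtain ⟨S, Q, hQ, hsz, pack⟩ := IH (m - 1) (by omega) (by omega) (by omega)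
        rcases Nat.even_or_odd m with heo | heo
        · -- m even : removal step for t, u stays
          have h0 : m % 2 = 0 := Nat.even_iff.1 heo
          set k := m / 2 with hkdef
          obtain ⟨a, hta, hca⟩ := hR k (by omega) (by omega)
          rw [(show 2 * k - 1 = m - 1 by omega)] at hta
          rw [(show 2 * k = m by omega)] at hta hca
          have hust := (hU.1 k (by omega) (by omega)).1
          rw [(show 2 * k - 1 = m - 1 by omega), (show 2 * k = m by omega)] at hust
          have hAt := Aset_addRow (ht.1 m hm)
            (by rw [← hta]; exact ht.1 (m - 1) (by omega))
          rw [← hta] at hAt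
          obtain ⟨hiffr, hct, hc1t, hcnt, hc1mem⟩ := hAt
          have hcB : (t m a : ℤ) - a = (δ + 1 - k1 - Q) - 1 := by
            rw [hca]; push_cast; omega
          rw [hcB] at hiffr hct hc1t
          rw [(show ((δ + 1 - (k1 : ℤ) - Q) - 1) + 1 = δ + 1 - k1 - Q by ring)] at hiffr hc1t
          have pack2 := pack.step_tdown hiffr hct hc1t
          have hps := psize_addRow (ht.1 m hm) a
          rw [← hta] at hps
          refine ⟨S, Q + 1, by omega, by omega, ?_⟩
          rw [(show δ + 1 - (k1 : ℤ) - ((Q + 1 : ℕ) : ℤ) = (δ + 1 - k1 - Q) - 1 by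
            push_cast; ring)]
          rw [(show u m = u (m - 1) from hust)]
          exact pack2
        · -- m odd : u adds; t adds the same box or stays
          have h1 : m % 2 = 1 := Nat.odd_iff.1 heo
          set k := (m + 1) / 2 with hkdef
          obtain ⟨b, hub, hwub⟩ := hU.2 k (by omega) (by omega)
          rw [(show 2 * k - 1 = m by omega), (show 2 * k - 2 = m - 1 by omega)] at hub hwub
          have hAu := Aset_addRow (hu.1 (m - 1) (by omega))
            (by rw [← hub]; exact hu.1 m hm)
          rw [← hub] at hAu
          obtain ⟨hiffu, hcu, hc1u, hcnu, hc1mem⟩ := hAu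
          rcases (hwt m (by omega) hm).1 h1 with ⟨hst, hw⟩ | ⟨a, hta, hwta⟩
          · -- t stays : the content of u's box is forced to be T
            have hszt : psize (t m) = psize (t (m - 1)) := by rw [hst]
            have hc_eq_T : (u (m - 1) b : ℤ) - b = δ + 1 - k1 + S := by
              have hwm : w m = δ - psize (t m) := hw
              rw [hwub] at hwm
              rw [hwm, hszt]
              omega
            rw [hc_eq_T] at hiffu hc1u
            have pack2 := pack.step_ustay hiffu hc1u
            refine ⟨S + 1, Q, by omega, by omega, ?_⟩
            rw [(show δ + 1 - (k1 : ℤ) + ((S + 1 : ℕ) : ℤ) = (δ + 1 - k1 + S) + 1 by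
              push_cast; ring)]
            rw [hst]
            exact pack2
          · -- t adds a box of the same content
            have hAt := Aset_addRow (ht.1 (m - 1) (by omega))
              (by rw [← hta]; exact ht.1 m hm)
            rw [← hta] at hAt
            obtain ⟨hifft, hct, hc1t, hcnt, hc1mem'⟩ := hAt
            have hceq : (t (m - 1) a : ℤ) - a = (u (m - 1) b : ℤ) - b := by
              rw [← hwta, ← hwub]
            rw [hceq] at hifft hct hc1t
            have pack2 := pack.step_both hiffu hcu hc1u hifft hct hc1t
            have hps := psize_addRow (ht.1 (m - 1) (by omega)) a
            rw [← hta] at hps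
            exact ⟨S, Q, by omega, by omega, pack2⟩
  -- extraction at the final step
  obtain ⟨S, Q, hQ, hsz, pack⟩ := Phi (2 * r - 1) (by omega) (by omega)
  rw [ht.2.2.1] at hsz
  rw [ht.2.2.1, hu.2.2.1] at pack
  have hBv : (δ + 1 - (k1 : ℤ) - Q) = δ + 1 - r := by push_cast; omega
  have hTv : (δ + 1 - (k1 : ℤ) + S) = δ + 1 - psize lam := by push_cast; omega
  rw [hBv, hTv] at pack
  obtain ⟨i, hi⟩ := mem_Aset.1 pack.hTu
  have hext := ext_lemma (content_strictAnti hlam) (content_strictAnti hmu)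
    pack.hBT hi pack.hiff pack.hbtw pack.hBu
  refine ⟨i, ?_, ?_, ?_⟩
  · intro j hj
    have := hext.2 j hj
    omega
  · omega
  · have h1 := hext.1
    rw [hmur]
    omega

/-! ### Construction machinery for the reverse direction -/

def psum (lam : ℕ → ℕ) (j : ℕ) : ℕ := ∑ j' ∈ Finset.range j, lam j'

open Classical in
/-- The row in which the `(b+1)`-st box is placed: rows of `lam` are filled in order,
and afterwards row `i` is extended. -/
noncomputable def rowAt (lam : ℕ → ℕ) (i b : ℕ) : ℕ :=
  if h : ∃ j, b < psum lam (j + 1) then Nat.find h else i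

/-- The shape after `k` boxes: fill `lam` row by row, then extend row `i`. -/
noncomputable def Fsh (lam : ℕ → ℕ) (i L k : ℕ) : ℕ → ℕ := fun j =>
  if k ≤ L then min (lam j) (k - psum lam j)
  else if j = i then lam i + (k - L) else lam j

lemma Fsh_apply (lam : ℕ → ℕ) (i L k j : ℕ) :
    Fsh lam i L k j =
      if k ≤ L then min (lam j) (k - psum lam j)
      else if j = i then lam i + (k - L) else lam j := rfl

lemma psum_mono (lam : ℕ → ℕ) : Monotone (psum lam) := by
  intro a b hab
  exact Finset.sum_le_sum_of_subset (Finset.range_subset_range.2 hab)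

lemma psum_succ (lam : ℕ → ℕ) (j : ℕ) : psum lam (j + 1) = psum lam j + lam j :=
  Finset.sum_range_succ lam j

lemma psum_zero (lam : ℕ → ℕ) : psum lam 0 = 0 := rfl

lemma psum_le_psize {lam : ℕ → ℕ} (hlam : IsPartition lam) (j : ℕ) :
    psum lam (j + 1) ≤ psize lam := by
  obtain ⟨N, hN⟩ := hlam.2
  have h1 : psize lam = psum lam (max N (j + 1)) := by
    rw [psize_eq_sum (max N (j+1)) (fun j' hj' => hN j' (le_trans (le_max_left _ _) hj'))]
    rfl
  rw [h1]
  exact psum_mono lam (le_max_right _ _)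

lemma psize_lt_psum {lam : ℕ → ℕ} (hlam : IsPartition lam) {b : ℕ} (hb : b < psize lam) :
    ∃ j, b < psum lam (j + 1) := by
  obtain ⟨N, hN⟩ := hlam.2
  refine ⟨N, ?_⟩
  have h1 : psize lam = psum lam N := psize_eq_sum N hN
  have h2 := psum_succ lam N
  omega

lemma rowAt_spec {lam : ℕ → ℕ} (hlam : IsPartition lam) {i b : ℕ} (hb : b < psize lam) :
    psum lam (rowAt lam i b) ≤ b ∧ b < psum lam (rowAt lam i b + 1) := by
  classical
  have h := psize_lt_psum hlam hb
  rw [rowAt, dif_pos h]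
  refine ⟨?_, Nat.find_spec h⟩
  rcases Nat.eq_zero_or_pos (Nat.find h) with he | hpos
  · rw [he, psum_zero]
    exact Nat.zero_le b
  · have hmin := Nat.find_min h (Nat.sub_lt hpos Nat.one_pos)
    push_neg at hmin
    have h2 : Nat.find h - 1 + 1 = Nat.find h := by omega
    rw [h2] at hmin
    exact hmin

lemma rowAt_big {lam : ℕ → ℕ} (hlam : IsPartition lam) {i b : ℕ} (hb : psize lam ≤ b) :
    rowAt lam i b = i := by
  classical
  rw [rowAt, dif_neg]
  push_neg
  intro j
  exact le_trans (psum_le_psize hlam j) hb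

lemma Fsh_zero (lam : ℕ → ℕ) (i L : ℕ) : Fsh lam i L 0 = fun _ => 0 := by
  funext j
  simp [Fsh]

lemma Fsh_last {lam : ℕ → ℕ} (hlam : IsPartition lam) {L : ℕ} (hL : L = psize lam) (i : ℕ) :
    Fsh lam i L L = lam := by
  funext j
  rw [Fsh_apply, if_pos le_rfl]
  have h1 := psum_le_psize hlam j
  have h2 := psum_succ lam j
  omega

lemma Fsh_val_big {lam : ℕ → ℕ} (hlam : IsPartition lam) {i L k : ℕ} (hL : L = psize lam)
    (hk : L ≤ k) : (Fsh lam i L k i : ℤ) = (lam i : ℤ) + k - L := by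
  rcases eq_or_lt_of_le hk with he | hlt
  · rw [← he, Fsh_last hlam hL i]
    omega
  · rw [Fsh_apply, if_neg (show ¬ k ≤ L by omega), if_pos rfl]
    omega

lemma Fsh_step {lam : ℕ → ℕ} (hlam : IsPartition lam) {L : ℕ} (hL : L = psize lam) (i k : ℕ) :
    Fsh lam i L (k + 1) = addRow (Fsh lam i L k) (rowAt lam i k) := by
  rcases Nat.lt_or_ge k L with hkL | hkL
  · -- row-filling regime
    have hb : k < psize lam := hL ▸ hkL
    obtain ⟨hs1, hs2⟩ := rowAt_spec hlam (i := i) hb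
    set j0 := rowAt lam i k with hj0
    have hps0 := psum_succ lam j0
    funext j
    by_cases hj : j = j0
    · rw [hj, addRow_self, Fsh_apply, Fsh_apply, if_pos (show k + 1 ≤ L by omega),
        if_pos (show k ≤ L by omega)]
      omega
    · rw [addRow_ne _ hj, Fsh_apply, Fsh_apply, if_pos (show k + 1 ≤ L by omega),
        if_pos (show k ≤ L by omega)]
      have hps := psum_succ lam j
      rcases lt_or_gt_of_ne hj with hlt | hgt
      · -- j < j0 : row j already full
        have h1 : psum lam (j + 1) ≤ psum lam j0 := psum_mono lam (by omega)
        omega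
      · -- j > j0 : row j still empty
        have h1 : psum lam (j0 + 1) ≤ psum lam j := psum_mono lam (by omega)
        omega
  · -- extension regime
    have hrow : rowAt lam i k = i := rowAt_big hlam (hL ▸ hkL)
    rw [hrow]
    have hkk : Fsh lam i L k i = lam i + (k - L) := by
      rcases eq_or_lt_of_le hkL with he | hlt
      · rw [← he, Fsh_last hlam hL i]
        omega
      · rw [Fsh_apply, if_neg (show ¬ k ≤ L by omega), if_pos rfl]
    have hoth : ∀ j, j ≠ i → Fsh lam i L k j = lam j := by
      intro j hj
      rcases eq_or_lt_of_le hkL with he | hlt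
      · rw [← he, Fsh_last hlam hL i]
      · rw [Fsh_apply, if_neg (show ¬ k ≤ L by omega), if_neg hj]
    funext j
    by_cases hj : j = i
    · rw [hj, addRow_self, hkk, Fsh_apply, if_neg (show ¬ k + 1 ≤ L by omega), if_pos rfl]
      omega
    · rw [addRow_ne _ hj, hoth j hj, Fsh_apply, if_neg (show ¬ k + 1 ≤ L by omega), if_neg hj]

lemma backward_dir (δ : ℤ) (r : ℕ) (hr : 1 ≤ r) (lam mu : ℕ → ℕ)
    (hlam : IsPartition lam) (hmu : IsPartition mu)
    (hmur : psize mu = r) (hlamr : psize lam ≤ r) (hne : lam ≠ mu)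
    (i : ℕ) (hoff : ∀ j, j ≠ i → lam j = mu j)
    (h2 : (mu i : ℤ) - (i + 1) = δ - psize lam)
    (h3 : (lam i : ℤ) - (i + 1) = δ - psize mu) :
    ∃ (u t : ℕ → ℕ → ℕ) (w : ℕ → ℤ),
      IsVacTab r u mu ∧ IsVacTab r t lam ∧ HasWeight δ r u w ∧ HasWeight δ r t w := by
  classical
  set L := psize lam with hLdef
  have hL : L = psize lam := hLdef
  rw [hmur] at h3
  have hmuiN : mu i = lam i + (r - L) := by omega
  have hLlt : L < r := by
    rcases eq_or_lt_of_le hlamr with he | h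
    · exfalso
      apply hne
      funext j
      by_cases hj : j = i
      · rw [hj]; omega
      · exact hoff j hj
    · exact h
  have hbnd : ∀ k, k ≤ r → ∀ j, j < i → lam i + (k - L) ≤ lam j := by
    intro k hk j hj
    have ha : lam j = mu j := hoff j (by omega)
    have hb : mu i ≤ mu j := hmu.1 hj.le
    omega
  have hpart : ∀ k, k ≤ r → IsPartition (Fsh lam i L k) := by
    intro k hk
    rcases le_or_gt k L with hkL | hkL
    · constructor
      · intro a b hab
        rw [Fsh_apply, Fsh_apply, if_pos hkL, if_pos hkL]
        have h1 := hlam.1 hab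
        have h2' := psum_mono lam hab
        omega
      · obtain ⟨N, hN⟩ := hlam.2
        exact ⟨N, fun j hj => by rw [Fsh_apply, if_pos hkL, hN j hj]; omega⟩
    · constructor
      · intro a b hab
        rcases eq_or_lt_of_le hab with he | hab'
        · rw [he]
        · rw [Fsh_apply, Fsh_apply, if_neg (show ¬ k ≤ L by omega),
            if_neg (show ¬ k ≤ L by omega)]
          by_cases hbi : b = i
          · rw [if_pos hbi, if_neg (show ¬ a = i by omega)]
            have := hbnd k hk a (by omega)
            omega
          · rw [if_neg hbi]
            by_cases hai : a = i
            · rw [if_pos hai]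
              have := hlam.1 hab
              rw [hai] at this
              omega
            · rw [if_neg hai]
              exact hlam.1 hab
      · obtain ⟨N, hN⟩ := hlam.2
        refine ⟨max N (i + 1), fun j hj => ?_⟩
        rw [Fsh_apply, if_neg (show ¬ k ≤ L by omega), if_neg (show ¬ j = i by omega)]
        exact hN j (by omega)
  have hsize : ∀ k, k ≤ r → psize (Fsh lam i L k) = k := by
    intro k
    induction k with
    | zero => intro _; rw [Fsh_zero]; exact psize_empty
    | succ k IH =>
      intro hk
      rw [Fsh_step hlam hL i k, psize_addRow (hpart k (by omega)) _, IH (by omega)]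
  have hFr : Fsh lam i L r = mu := by
    funext j
    by_cases hj : j = i
    · rw [hj, Fsh_apply, if_neg (show ¬ r ≤ L by omega), if_pos rfl]
      omega
    · rw [Fsh_apply, if_neg (show ¬ r ≤ L by omega), if_neg hj]
      exact (hoff j hj)
  have hFL : Fsh lam i L L = lam := Fsh_last hlam hL i
  refine ⟨fun m => if m < 2 * r then Fsh lam i L ((m + 1) / 2) else fun _ => 0,
      fun m => if m < 2 * r then Fsh lam i L (min ((m + 1) / 2) (r + L - 1 - m / 2))
        else fun _ => 0,
      fun m => if m % 2 = 0 then ((m / 2 : ℕ) : ℤ)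
        else (Fsh lam i L ((m + 1) / 2 - 1) (rowAt lam i ((m + 1) / 2 - 1)) : ℤ) -
          (rowAt lam i ((m + 1) / 2 - 1)),
      ?_, ?_, ?_, ?_⟩
  · -- IsVacTab r u mu
    refine ⟨?_, ?_, ?_, ?_, ?_, ?_⟩
    · intro m hm
      beta_reduce
      rw [if_pos hm]
      exact hpart _ (by omega)
    · beta_reduce
      rw [if_pos (by omega : 0 < 2 * r), (show (0 + 1) / 2 = 0 by norm_num), Fsh_zero]
    · beta_reduce
      rw [if_pos (by omega : 2 * r - 1 < 2 * r), (show (2 * r - 1 + 1) / 2 = r by omega), hFr]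
    · intro m hm hodd
      right
      refine ⟨rowAt lam i ((m + 1) / 2 - 1), ?_⟩
      beta_reduce
      rw [if_pos hm, if_pos (by omega : m - 1 < 2 * r),
        (show (m - 1 + 1) / 2 = (m + 1) / 2 - 1 by omega)]
      have hst := Fsh_step hlam hL i ((m + 1) / 2 - 1)
      rw [(show (m + 1) / 2 - 1 + 1 = (m + 1) / 2 by omega)] at hst
      exact hst
    · intro m h2m hm heven
      left
      beta_reduce
      rw [if_pos hm, if_pos (by omega : m - 1 < 2 * r),
        (show (m - 1 + 1) / 2 = (m + 1) / 2 by omega)]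
    · intro m hm
      beta_reduce
      rw [if_neg (by omega)]
  · -- IsVacTab r t lam
    refine ⟨?_, ?_, ?_, ?_, ?_, ?_⟩
    · intro m hm
      beta_reduce
      rw [if_pos hm]
      exact hpart _ (by omega)
    · beta_reduce
      rw [if_pos (by omega : 0 < 2 * r),
        (show min ((0 + 1) / 2) (r + L - 1 - 0 / 2) = 0 by omega), Fsh_zero]
    · beta_reduce
      rw [if_pos (by omega : 2 * r - 1 < 2 * r),
        (show min ((2 * r - 1 + 1) / 2) (r + L - 1 - (2 * r - 1) / 2) = L by omega), hFL]
    · intro m hm hodd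
      set k := (m + 1) / 2 with hkdef
      by_cases hc : 2 * k ≤ r + L
      · right
        refine ⟨rowAt lam i (k - 1), ?_⟩
        beta_reduce
        rw [if_pos hm, if_pos (by omega : m - 1 < 2 * r),
          (show min ((m + 1) / 2) (r + L - 1 - m / 2) = k by omega),
          (show min ((m - 1 + 1) / 2) (r + L - 1 - (m - 1) / 2) = k - 1 by omega)]
        have hst := Fsh_step hlam hL i (k - 1)
        rw [(show k - 1 + 1 = k by omega)] at hst
        exact hst
      · left
        beta_reduce
        rw [if_pos hm, if_pos (by omega : m - 1 < 2 * r),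
          (show min ((m + 1) / 2) (r + L - 1 - m / 2) = r + L - k by omega),
          (show min ((m - 1 + 1) / 2) (r + L - 1 - (m - 1) / 2) = r + L - k by omega)]
    · intro m h2m hm heven
      set k := m / 2 with hkdef
      by_cases hc : 2 * k + 1 ≤ r + L
      · left
        beta_reduce
        rw [if_pos hm, if_pos (by omega : m - 1 < 2 * r),
          (show min ((m + 1) / 2) (r + L - 1 - m / 2) = k by omega),
          (show min ((m - 1 + 1) / 2) (r + L - 1 - (m - 1) / 2) = k by omega)]
      · right
        refine ⟨i, ?_⟩
        beta_reduce
        rw [if_pos hm, if_pos (by omega : m - 1 < 2 * r),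
          (show min ((m + 1) / 2) (r + L - 1 - m / 2) = r + L - 1 - k by omega),
          (show min ((m - 1 + 1) / 2) (r + L - 1 - (m - 1) / 2) = r + L - k by omega)]
        have hst := Fsh_step hlam hL i (r + L - 1 - k)
        rw [rowAt_big hlam (show psize lam ≤ r + L - 1 - k by omega)] at hst
        rw [(show r + L - 1 - k + 1 = r + L - k by omega)] at hst
        exact hst
    · intro m hm
      beta_reduce
      rw [if_neg (by omega)]
  · -- HasWeight δ r u w
    intro m h1m hm
    constructor
    · intro hodd
      right
      refine ⟨rowAt lam i ((m + 1) / 2 - 1), ?_, ?_⟩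
      · beta_reduce
        rw [if_pos hm, if_pos (by omega : m - 1 < 2 * r),
          (show (m - 1 + 1) / 2 = (m + 1) / 2 - 1 by omega)]
        have hst := Fsh_step hlam hL i ((m + 1) / 2 - 1)
        rw [(show (m + 1) / 2 - 1 + 1 = (m + 1) / 2 by omega)] at hst
        exact hst
      · beta_reduce
        rw [if_neg (by omega : ¬ m % 2 = 0), if_pos (by omega : m - 1 < 2 * r),
          (show (m - 1 + 1) / 2 = (m + 1) / 2 - 1 by omega)]
    · intro heven
      left
      constructor
      · beta_reduce
        rw [if_pos hm, if_pos (by omega : m - 1 < 2 * r),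
          (show (m - 1 + 1) / 2 = (m + 1) / 2 by omega)]
      · beta_reduce
        rw [if_pos (by omega : m % 2 = 0), if_pos hm, hsize ((m + 1) / 2) (by omega)]
        omega
  · -- HasWeight δ r t w
    intro m h1m hm
    constructor
    · intro hodd
      set k := (m + 1) / 2 with hkdef
      by_cases hc : 2 * k ≤ r + L
      · right
        refine ⟨rowAt lam i (k - 1), ?_, ?_⟩
        · beta_reduce
          rw [if_pos hm, if_pos (by omega : m - 1 < 2 * r),
            (show min ((m + 1) / 2) (r + L - 1 - m / 2) = k by omega),
            (show min ((m - 1 + 1) / 2) (r + L - 1 - (m - 1) / 2) = k - 1 by omega)]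
          have hst := Fsh_step hlam hL i (k - 1)
          rw [(show k - 1 + 1 = k by omega)] at hst
          exact hst
        · beta_reduce
          rw [if_neg (by omega : ¬ m % 2 = 0), if_pos (by omega : m - 1 < 2 * r),
            (show min ((m - 1 + 1) / 2) (r + L - 1 - (m - 1) / 2) = k - 1 by omega)]
      · left
        constructor
        · beta_reduce
          rw [if_pos hm, if_pos (by omega : m - 1 < 2 * r),
            (show min ((m + 1) / 2) (r + L - 1 - m / 2) = r + L - k by omega),
            (show min ((m - 1 + 1) / 2) (r + L - 1 - (m - 1) / 2) = r + L - k by omega)]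
        · beta_reduce
          rw [if_neg (by omega : ¬ m % 2 = 0), if_pos hm,
            (show min ((m + 1) / 2) (r + L - 1 - m / 2) = r + L - k by omega),
            hsize (r + L - k) (by omega),
            rowAt_big hlam (show psize lam ≤ (m + 1) / 2 - 1 by omega)]
          have hval := Fsh_val_big hlam (i := i) hL (show L ≤ (m + 1) / 2 - 1 by omega)
          rw [hval]
          omega
    · intro heven
      set k := m / 2 with hkdef
      by_cases hc : 2 * k + 1 ≤ r + L
      · left
        constructor
        · beta_reduce
          rw [if_pos hm, if_pos (by omega : m - 1 < 2 * r),
            (show min ((m + 1) / 2) (r + L - 1 - m / 2) = k by omega),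
            (show min ((m - 1 + 1) / 2) (r + L - 1 - (m - 1) / 2) = k by omega)]
        · beta_reduce
          rw [if_pos (by omega : m % 2 = 0), if_pos hm,
            (show min ((m + 1) / 2) (r + L - 1 - m / 2) = k by omega),
            hsize k (by omega)]
      · right
        refine ⟨i, ?_, ?_⟩
        · beta_reduce
          rw [if_pos hm, if_pos (by omega : m - 1 < 2 * r),
            (show min ((m + 1) / 2) (r + L - 1 - m / 2) = r + L - 1 - k by omega),
            (show min ((m - 1 + 1) / 2) (r + L - 1 - (m - 1) / 2) = r + L - k by omega)]
          have hst := Fsh_step hlam hL i (r + L - 1 - k)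
          rw [rowAt_big hlam (show psize lam ≤ r + L - 1 - k by omega)] at hst
          rw [(show r + L - 1 - k + 1 = r + L - k by omega)] at hst
          exact hst
        · beta_reduce
          rw [if_pos (by omega : m % 2 = 0), if_pos hm,
            (show min ((m + 1) / 2) (r + L - 1 - m / 2) = r + L - 1 - k by omega)]
          have hval := Fsh_val_big hlam (i := i) hL (show L ≤ r + L - 1 - k by omega)
          rw [hval]
          omega

/-- Combinatorial characterization of a common Jucys–Murphy weight:
for `μ` a partition of `r` and `λ ≠ μ` a partition with `|λ| ≤ r`, there exist
vacillating tableaux `u` of shape `μ` and `t` of shape `λ`, both of length `r`,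
with equal weight vectors, iff there is a row index `i` (0-indexed) with
`λ_j = μ_j` for all `j ≠ i`, `μ_i − (i+1) = δ − |λ|` and `λ_i − (i+1) = δ − |μ|`. -/
theorem common_JM_weight_iff_row_condition (δ : ℤ) (r : ℕ) (hr : 1 ≤ r)
    (lam mu : ℕ → ℕ) (hlam : IsPartition lam) (hmu : IsPartition mu)
    (hmur : psize mu = r) (hlamr : psize lam ≤ r) (hne : lam ≠ mu) :
    (∃ (u t : ℕ → ℕ → ℕ) (w : ℕ → ℤ),
        IsVacTab r u mu ∧ IsVacTab r t lam ∧
        HasWeight δ r u w ∧ HasWeight δ r t w) ↔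
      ∃ i : ℕ, (∀ j, j ≠ i → lam j = mu j) ∧
        (mu i : ℤ) - (i + 1) = δ - psize lam ∧
        (lam i : ℤ) - (i + 1) = δ - psize mu := by
  constructor
  · rintro ⟨u, t, w, hu, ht, hwu, hwt⟩
    exact forward_dir δ r hr lam mu hlam hmu hmur hne u t w hu ht hwu hwt
  · rintro ⟨i, hoff, h2, h3⟩
    exact backward_dir δ r hr lam mu hlam hmu hmur hlamr hne i hoff h2 h3
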